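/- Quadratic coercivity of the nonlinear energy density E₀: suppose γ > 4/3 and define, for real a, b with 1+a > 0 and 1+a+b > 0, E₀(a,b) = (1/(γ−1))[(1+a)^{2−2γ}(1+a+b)^{1−γ} − 3(γ−1)(1+a)^{−1} + (γ−1)(1+a)^{−2} b + (3γ−4)]. Then there exist ε ∈ (0, 1/2) and C ≥ 1, depending only on γ, such that for all a, b with |a| ≤ ε and |b| ≤ ε: C^{−1}(a² + b²) ≤ E₀(a,b) ≤ C(a² + b²). -/

import Mathlib

open Real Set


/-- If k(1)=0, k'(1)=0, k''≥0 on Icc (1-ε) (1+ε), then k ≥ 0 there. -/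
lemma nonneg_of_second {k k' k'' : ℝ → ℝ} {ε : ℝ} (hε : 0 < ε)
    (hd1 : ∀ x ∈ Icc (1-ε) (1+ε), HasDerivAt k (k' x) x)
    (hd2 : ∀ x ∈ Icc (1-ε) (1+ε), HasDerivAt k' (k'' x) x)
    (hk1 : k 1 = 0) (hk'1 : k' 1 = 0)
    (hk'' : ∀ x ∈ Icc (1-ε) (1+ε), 0 ≤ k'' x) :
    ∀ u ∈ Icc (1-ε) (1+ε), 0 ≤ k u := by
  have hmem1 : (1:ℝ) ∈ Icc (1-ε) (1+ε) := by constructor <;> linarith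
  -- k' is monotone on the interval
  have hmono' : MonotoneOn k' (Icc (1-ε) (1+ε)) := by
    apply monotoneOn_of_hasDerivWithinAt_nonneg (convex_Icc _ _)
      (fun x hx => (hd2 x hx).continuousAt.continuousWithinAt)
      (f' := k'')
    · intro x hx
      rw [interior_Icc] at hx
      exact (hd2 x (Ioo_subset_Icc_self hx)).hasDerivWithinAt
    · intro x hx
      rw [interior_Icc] at hx
      exact hk'' x (Ioo_subset_Icc_self hx)
  intro u hu
  rcases le_total 1 u with h1u | h1u
  · -- k monotone on [1, u] since k' ≥ 0 there
    have hsub : Icc (1:ℝ) (1+ε) ⊆ Icc (1-ε) (1+ε) := Icc_subset_Icc (by linarith) le_rfl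
    have hmono : MonotoneOn k (Icc (1:ℝ) (1+ε)) := by
      apply monotoneOn_of_hasDerivWithinAt_nonneg (convex_Icc _ _)
        (fun x hx => (hd1 x (hsub hx)).continuousAt.continuousWithinAt) (f' := k')
      · intro x hx
        rw [interior_Icc] at hx
        exact (hd1 x (hsub (Ioo_subset_Icc_self hx))).hasDerivWithinAt
      · intro x hx
        rw [interior_Icc] at hx
        have := hmono' hmem1 (hsub (Ioo_subset_Icc_self hx)) hx.1.le
        linarith [hk'1]
    have := hmono (left_mem_Icc.2 (by linarith)) ⟨h1u, hu.2⟩ h1u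
    linarith [hk1]
  · have hsub : Icc (1-ε) (1:ℝ) ⊆ Icc (1-ε) (1+ε) := Icc_subset_Icc le_rfl (by linarith)
    have hanti : AntitoneOn k (Icc (1-ε) (1:ℝ)) := by
      apply antitoneOn_of_hasDerivWithinAt_nonpos (convex_Icc _ _)
        (fun x hx => (hd1 x (hsub hx)).continuousAt.continuousWithinAt) (f' := k')
      · intro x hx
        rw [interior_Icc] at hx
        exact (hd1 x (hsub (Ioo_subset_Icc_self hx))).hasDerivWithinAt
      · intro x hx
        rw [interior_Icc] at hx
        have := hmono' (hsub (Ioo_subset_Icc_self hx)) hmem1 hx.2.le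
        linarith [hk'1]
    have := hanti ⟨hu.1, h1u⟩ (right_mem_Icc.2 (by linarith)) h1u
    linarith [hk1]

lemma quad_bound {f f' f'' : ℝ → ℝ}
    (hd1 : ∀ x ∈ Icc (1/2 : ℝ) (3/2), HasDerivAt f (f' x) x)
    (hd2 : ∀ x ∈ Icc (1/2 : ℝ) (3/2), HasDerivAt f' (f'' x) x)
    (hf1 : f 1 = 0) (hf'1 : f' 1 = 0)
    (hcont : ContinuousAt f'' 1) (hpos : 0 < f'' 1) :
    ∃ ε ∈ Ioo (0:ℝ) (1/4), ∃ c > 0, ∃ C > 0,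
      ∀ u, |u - 1| ≤ ε → c * (u-1)^2 ≤ f u ∧ f u ≤ C * (u-1)^2 := by
  obtain ⟨δ, hδ0, hδ⟩ := Metric.continuousAt_iff.1 hcont (f'' 1 / 2) (by linarith)
  set ε := min (δ/2) (1/8) with hεdef
  have hε0 : 0 < ε := lt_min (by linarith) (by norm_num)
  have hε8 : ε ≤ 1/8 := min_le_right _ _
  have hεδ : ε < δ := lt_of_le_of_lt (min_le_left _ _) (by linarith)
  have hband : ∀ x, |x - 1| ≤ ε → f'' 1 / 2 ≤ f'' x ∧ f'' x ≤ 3/2 * f'' 1 := by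
    intro x hx
    have := hδ (show dist x 1 < δ by rw [Real.dist_eq]; linarith)
    rw [Real.dist_eq] at this
    have := abs_lt.1 this
    constructor <;> linarith [this.1, this.2]
  have hsubset : Icc (1-ε) (1+ε) ⊆ Icc (1/2 : ℝ) (3/2) := by
    apply Icc_subset_Icc <;> linarith
  have habs : ∀ x ∈ Icc (1-ε) (1+ε), |x - 1| ≤ ε := by
    intro x hx; rw [abs_le]; constructor <;> [linarith [hx.1]; linarith [hx.2]]
  have hderivsq : ∀ (c : ℝ) (x : ℝ),
      HasDerivAt (fun y => c * (y-1)^2) (c * (2*(x-1))) x := by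
    intro c x
    have h := (((hasDerivAt_id x).sub_const 1).pow 2).const_mul c
    simp only [id_eq, pow_one, mul_one] at h
    refine h.congr_deriv ?_
    push_cast
    ring
  refine ⟨ε, ⟨hε0, by linarith⟩, f'' 1 / 4, by linarith, 3/4 * f'' 1, by linarith, ?_⟩
  intro u hu
  have humem : u ∈ Icc (1-ε) (1+ε) := by
    have := abs_le.1 hu; constructor <;> linarith [this.1, this.2]
  constructor
  · have h := nonneg_of_second (k := fun x => f x - f'' 1 / 4 * (x-1)^2)
      (k' := fun x => f' x - f'' 1 / 4 * (2*(x-1)))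
      (k'' := fun x => f'' x - f'' 1 / 2) hε0
      (fun x hx => ((hd1 x (hsubset hx)).sub (hderivsq _ x)))
      (fun x hx => by
        have h2 := ((hd2 x (hsubset hx)).sub ((hasDerivAt_id x).sub_const 1 |>.const_mul (f'' 1/4 * 2)))
        simp only [mul_one] at h2
        convert h2 using 1
        · rfl
        · rfl
        · ext y; simp only [id_eq, Pi.sub_apply]; ring_nf
        · ring)
      (by simp [hf1]) (by simp [hf'1])
      (fun x hx => by have := (hband x (habs x hx)).1; linarith)
      u humem
    simpa [sub_nonneg] using h
  · have h := nonneg_of_second (k := fun x => 3/4 * f'' 1 * (x-1)^2 - f x)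
      (k' := fun x => 3/4 * f'' 1 * (2*(x-1)) - f' x)
      (k'' := fun x => 3/2 * f'' 1 - f'' x) hε0
      (fun x hx => ((hderivsq _ x).sub (hd1 x (hsubset hx))))
      (fun x hx => by
        have h2 := (((hasDerivAt_id x).sub_const 1 |>.const_mul (3/4 * f'' 1 * 2)).sub (hd2 x (hsubset hx)))
        simp only [mul_one] at h2
        convert h2 using 1
        · rfl
        · rfl
        · ext y; simp only [id_eq, Pi.sub_apply]; ring_nf
        · ring)
      (by simp [hf1]) (by simp [hf'1])
      (fun x hx => by have := (hband x (habs x hx)).2; linarith)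
      u humem
    simpa [sub_nonneg] using h

lemma rpow_hasDerivAt {p x : ℝ} (hx : x ≠ 0) :
    HasDerivAt (fun t : ℝ => t ^ p) (p * x ^ (p - 1)) x :=
  Real.hasDerivAt_rpow_const (Or.inl hx)

lemma psi_bound {p : ℝ} (hp : 0 < p) :
    ∃ ε ∈ Ioo (0:ℝ) (1/4), ∃ c > 0, ∃ C > 0,
      ∀ u, |u - 1| ≤ ε →
        c * (u-1)^2 ≤ u ^ (-p) - 1 + p * (u - 1) ∧
        u ^ (-p) - 1 + p * (u - 1) ≤ C * (u-1)^2 := by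
  have hne : ∀ x ∈ Icc (1/2 : ℝ) (3/2), x ≠ 0 := fun x hx => by
    have := hx.1; intro h; rw [h] at this; norm_num at this
  apply quad_bound (f' := fun t => -p * t ^ (-p - 1) + p)
    (f'' := fun t => p * (p+1) * t ^ (-p - 2))
  · intro x hx
    have h := ((rpow_hasDerivAt (p := -p) (hne x hx)).sub_const 1).add
      (((hasDerivAt_id x).sub_const 1).const_mul p)
    simp only [id_eq, mul_one] at h
    convert h using 1
    all_goals first | rfl | ring | (ext y; ring_nf) | ring_nf
  · intro x hx
    have h := ((rpow_hasDerivAt (p := -p - 1) (hne x hx)).const_mul (-p)).add_const p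
    rw [show -p - 1 - 1 = -p - 2 by ring] at h
    convert h using 1
    all_goals first | rfl | ring | (ext y; ring_nf) | ring_nf
  · simp [Real.one_rpow]
  · simp
  · exact (continuousAt_const.mul ((Real.continuousAt_rpow_const 1 _ (Or.inl one_ne_zero))))
  · simp only [Real.one_rpow, mul_one]
    positivity

lemma m_bound {γ : ℝ} (hγ : 4/3 < γ) :
    ∃ ε ∈ Ioo (0:ℝ) (1/4), ∃ c > 0, ∃ C > 0,
      ∀ u, |u - 1| ≤ ε →
        c * (u-1)^2 ≤ γ * u ^ (-(4*(γ-1)/γ)) - 4*(γ-1) * u ^ (-1:ℝ) + (3*γ-4) ∧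
        γ * u ^ (-(4*(γ-1)/γ)) - 4*(γ-1) * u ^ (-1:ℝ) + (3*γ-4) ≤ C * (u-1)^2 := by
  have hγ0 : (0:ℝ) < γ := by linarith
  set q : ℝ := 4*(γ-1)/γ with hq
  have hγq : γ * q = 4*(γ-1) := by rw [hq]; field_simp
  have hq1 : 1 < q := by
    rw [hq, lt_div_iff₀ hγ0]; linarith
  have hne : ∀ x ∈ Icc (1/2 : ℝ) (3/2), x ≠ 0 := fun x hx => by
    have := hx.1; intro h; rw [h] at this; norm_num at this
  apply quad_bound
    (f' := fun u => -(γ*q) * u ^ (-q - 1) + 4*(γ-1) * u ^ (-2:ℝ))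
    (f'' := fun u => γ*q*(q+1) * u ^ (-q - 2) - 8*(γ-1) * u ^ (-3:ℝ))
  · intro x hx
    have h1 := (rpow_hasDerivAt (p := -q) (hne x hx)).const_mul γ
    have h2 := (rpow_hasDerivAt (p := (-1:ℝ)) (hne x hx)).const_mul (4*(γ-1))
    have h := (h1.sub h2).add_const (3*γ-4)
    convert h using 1
    all_goals first | rfl | ring | (ext y; ring_nf) | ring_nf
  · intro x hx
    have h1 := (rpow_hasDerivAt (p := -q - 1) (hne x hx)).const_mul (-(γ*q))
    have h2 := (rpow_hasDerivAt (p := (-2:ℝ)) (hne x hx)).const_mul (4*(γ-1))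
    have h := h1.add h2
    rw [show -q - 1 - 1 = -q - 2 by ring] at h
    convert h using 1
    all_goals first | rfl | ring | (ext y; ring_nf) | ring_nf
  · simp only [Real.one_rpow, mul_one]; ring
  · simp only [Real.one_rpow, mul_one]; linarith [hγq]
  · exact ((continuousAt_const.mul (Real.continuousAt_rpow_const 1 _ (Or.inl one_ne_zero))).sub
      (continuousAt_const.mul (Real.continuousAt_rpow_const 1 _ (Or.inl one_ne_zero))))
  · simp only [Real.one_rpow, mul_one]
    nlinarith [hγq, hq1]

lemma rpow_lipschitz (σ : ℝ) :
    ∃ L : ℝ, 1 ≤ L ∧ ∀ u : ℝ, |u - 1| ≤ 1/4 → |u ^ σ - 1| ≤ L * |u - 1| := by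
  set M : ℝ := |σ| * ((3/4:ℝ) ^ (σ-1) + (5/4:ℝ) ^ (σ-1)) with hM
  have hM0 : 0 ≤ M := by positivity
  refine ⟨max M 1, le_max_right _ _, ?_⟩
  intro u hu
  have hu' := abs_le.1 hu
  have hus : u ∈ Icc (3/4 : ℝ) (5/4) := ⟨by linarith [hu'.1], by linarith [hu'.2]⟩
  have h1s : (1:ℝ) ∈ Icc (3/4 : ℝ) (5/4) := by constructor <;> norm_num
  have key := Convex.norm_image_sub_le_of_norm_hasDerivWithin_le
    (f := fun t : ℝ => t ^ σ) (f' := fun t : ℝ => σ * t ^ (σ - 1)) (s := Icc (3/4 : ℝ) (5/4))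
    (C := M)
    (fun x hx => (Real.hasDerivAt_rpow_const (Or.inl (by intro h; subst h; exact absurd hx.1 (by norm_num)))).hasDerivWithinAt)
    ?_ (convex_Icc _ _) h1s hus
  · calc |u ^ σ - 1| = ‖u ^ σ - (1:ℝ) ^ σ‖ := by rw [Real.one_rpow]; rfl
      _ ≤ M * ‖u - 1‖ := key
      _ ≤ max M 1 * |u - 1| := by
          apply mul_le_mul_of_nonneg_right (le_max_left _ _) (abs_nonneg _)
  · intro x hx
    have hx0 : (0:ℝ) < x := by linarith [hx.1]
    have hxp : 0 ≤ x ^ (σ - 1) := Real.rpow_nonneg hx0.le _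
    have hbound : x ^ (σ-1) ≤ (3/4:ℝ) ^ (σ-1) + (5/4:ℝ) ^ (σ-1) := by
      rcases le_or_gt 0 (σ - 1) with h | h
      · have := Real.rpow_le_rpow hx0.le hx.2 h
        have h34 : (0:ℝ) ≤ (3/4:ℝ) ^ (σ-1) := Real.rpow_nonneg (by norm_num) _
        linarith
      · have := Real.rpow_le_rpow_of_nonpos (by norm_num : (0:ℝ) < 3/4) hx.1 h.le
        have h54 : (0:ℝ) ≤ (5/4:ℝ) ^ (σ-1) := Real.rpow_nonneg (by norm_num) _
        linarith
    rw [Real.norm_eq_abs, abs_mul, abs_of_nonneg hxp]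
    calc |σ| * x ^ (σ-1) ≤ |σ| * ((3/4:ℝ) ^ (σ-1) + (5/4:ℝ) ^ (σ-1)) :=
          mul_le_mul_of_nonneg_left hbound (abs_nonneg _)
      _ = M := hM.symm

lemma key_identity {γ u v : ℝ} (hγ0 : 0 < γ) (hu : 0 < u) (hv : 0 < v) :
    u ^ (2 - 2*γ) * v ^ (1-γ) - 3*(γ-1)*u^(-1:ℝ) + (γ-1)*u^(-2:ℝ)*(v - u) + (3*γ-4)
      = u^(-2:ℝ) * u ^ ((4-2*γ)/γ) *
          ((v / u ^ ((4-2*γ)/γ)) ^ (-(γ-1)) - 1 + (γ-1) * (v / u ^ ((4-2*γ)/γ) - 1))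
        + (γ * u ^ (-(4*(γ-1)/γ)) - 4*(γ-1) * u ^ (-1:ℝ) + (3*γ-4)) := by
  set σ : ℝ := (4-2*γ)/γ with hσ
  have hw : (0:ℝ) < u ^ σ := Real.rpow_pos_of_pos hu _
  have h1 : (v / u ^ σ) ^ (-(γ-1)) = v ^ (1-γ) * u ^ (σ*(γ-1)) := by
    rw [Real.div_rpow hv.le hw.le, ← Real.rpow_mul hu.le, div_eq_mul_inv,
      show σ * -(γ-1) = -(σ*(γ-1)) by ring, Real.rpow_neg hu.le, inv_inv,
      show -(γ-1) = 1 - γ by ring]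
  have hA : u ^ (2-2*γ) = u ^ (-2:ℝ) * u ^ σ * u ^ (σ*(γ-1)) := by
    rw [← Real.rpow_add hu, ← Real.rpow_add hu]
    congr 1
    rw [hσ]
    field_simp
    ring
  have hB : u ^ (-2:ℝ) * u ^ σ = u ^ (-(4*(γ-1)/γ)) := by
    rw [← Real.rpow_add hu]
    congr 1
    rw [hσ]
    field_simp
    ring
  have hC : u ^ σ * (v / u ^ σ) = v := by field_simp
  have hD : u ^ (-2:ℝ) * u = u ^ (-1:ℝ) := by
    nth_rewrite 2 [← Real.rpow_one u]
    rw [← Real.rpow_add hu]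
    norm_num
  rw [h1]
  linear_combination v ^ (1-γ) * hA - (γ-1) * hD + γ * hB - (γ-1) * u ^ (-2:ℝ) * hC

section aux
lemma aux_sq_abs {x M : ℝ} (h : |x| ≤ M) : x^2 ≤ M^2 := by
  have h' := abs_le.1 h; nlinarith [h'.1, h'.2]

lemma aux_vw_hi {A B V L2 : ℝ} (hA : 0 ≤ A) (hB : 0 ≤ B) (hL : 1 ≤ L2)
    (h : V^2 ≤ (2*L2*A + B)^2) : V^2 ≤ 2*B^2 + 8*L2^2*A^2 := by
  nlinarith [sq_nonneg (2*L2*A - B)]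

lemma aux_b_sq {A B V L2 : ℝ} (hA : 0 ≤ A) (hB : 0 ≤ B) (hV : 0 ≤ V) (hL : 1 ≤ L2)
    (h : B ≤ V + 2*L2*A) : B^2 ≤ 2*V^2 + 8*L2^2*A^2 := by
  nlinarith [sq_nonneg (V - 2*L2*A)]

lemma aux_X_bounds {x y : ℝ} (h1 : 7/8 ≤ x) (h2 : x ≤ 9/8) (hm : x^2 * y = 1) (hy : 0 < y) :
    1/2 ≤ y ∧ y ≤ 2 := by constructor <;> nlinarith

lemma aux_sq_bounds {x : ℝ} (h1 : 7/8 ≤ x) (h2 : x ≤ 9/8) : 1/2 ≤ x^2 ∧ x^2 ≤ 2 := by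
  constructor <;> nlinarith

lemma aux_tsq {s w2 r : ℝ} (h : s * w2 = r) (h1 : 1/2 ≤ w2) (h2 : w2 ≤ 2) (hs : 0 ≤ s) :
    r/2 ≤ s ∧ s ≤ 2*r := by constructor <;> nlinarith

lemma aux_K {X w : ℝ} (h1 : 1/2 ≤ X) (h2 : X ≤ 2) (h3 : 7/8 ≤ w) (h4 : w ≤ 9/8) :
    1/4 ≤ X*w ∧ X*w ≤ 4 := by constructor <;> nlinarith

lemma aux_P {K c s r : ℝ} (hK1 : 1/4 ≤ K) (hK2 : K ≤ 4) (hc : 0 < c)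
    (hs1 : r/2 ≤ s) (hs2 : s ≤ 2*r) (hr : 0 ≤ r) :
    c/8*r ≤ K*(c*s) ∧ K*(c*s) ≤ 8*c*r := by
  have hs0 : 0 ≤ s := by linarith
  have hA : (1/4)*(c*s) ≤ K*(c*s) := mul_le_mul_of_nonneg_right hK1 (by positivity)
  have hB : c*(r/2) ≤ c*s := mul_le_mul_of_nonneg_left hs1 hc.le
  have hA' : K*(c*s) ≤ 4*(c*s) := mul_le_mul_of_nonneg_right hK2 (by positivity)
  have hB' : c*s ≤ c*(2*r) := mul_le_mul_of_nonneg_left hs2 hc.le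
  constructor
  · nlinarith
  · nlinarith

lemma aux_F_hi {P M r a2 b2 C1 C2 L2 : ℝ} (hP : P ≤ 8*C1*r) (hM : M ≤ C2*a2)
    (hr : r ≤ 2*b2 + 8*L2^2*a2) (hr0 : 0 ≤ r) (hC1 : 0 < C1) (hC2 : 0 < C2)
    (ha2 : 0 ≤ a2) (hb2 : 0 ≤ b2) :
    P + M ≤ (64*C1*L2^2 + 16*C1 + C2)*(a2 + b2) := by
  have h1 : 8*C1*r ≤ 8*C1*(2*b2 + 8*L2^2*a2) :=
    mul_le_mul_of_nonneg_left hr (by positivity)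
  nlinarith [mul_nonneg (mul_nonneg hC1.le (sq_nonneg L2)) hb2,
    mul_nonneg hC1.le ha2, mul_nonneg hC2.le hb2]
end aux


set_option maxHeartbeats 1000000 in
/-- Quadratic coercivity of the nonlinear energy density E₀: for γ > 4/3 there are
ε ∈ (0, 1/2) and C ≥ 1 (depending only on γ) such that C⁻¹(a²+b²) ≤ E₀(a,b) ≤ C(a²+b²)
whenever |a| ≤ ε and |b| ≤ ε. -/
theorem stmt_7 (γ : ℝ) (hγ : 4 / 3 < γ) :
    let E₀ : ℝ → ℝ → ℝ := fun a b =>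
      (1 / (γ - 1)) * ((1 + a) ^ (2 - 2 * γ) * (1 + a + b) ^ (1 - γ)
        - 3 * (γ - 1) * (1 + a) ^ (-1 : ℝ) + (γ - 1) * (1 + a) ^ (-2 : ℝ) * b + (3 * γ - 4))
    ∃ ε ∈ Ioo (0 : ℝ) (1 / 2), ∃ C : ℝ, 1 ≤ C ∧
      ∀ a b : ℝ, |a| ≤ ε → |b| ≤ ε →
        C⁻¹ * (a ^ 2 + b ^ 2) ≤ E₀ a b ∧ E₀ a b ≤ C * (a ^ 2 + b ^ 2) := by
  intro E₀
  have hγ1 : (0:ℝ) < γ - 1 := by linarith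
  have hγ0 : (0:ℝ) < γ := by linarith
  obtain ⟨ε₁, hε₁, c₁, hc₁, C₁, hC₁, Hψ⟩ := psi_bound (p := γ - 1) hγ1
  obtain ⟨ε₂, hε₂, c₂, hc₂, C₂, hC₂, Hm⟩ := m_bound hγ
  obtain ⟨L, hL1, HL⟩ := rpow_lipschitz ((4-2*γ)/γ)
  have hL0 : (0:ℝ) < L := by linarith
  set ε : ℝ := min (min ε₂ (ε₁ / (8*L))) (1/(8*L)) with hεdef
  have hε0 : 0 < ε :=
    lt_min (lt_min hε₂.1 (div_pos hε₁.1 (by positivity))) (by positivity)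
  have hεε₂ : ε ≤ ε₂ := le_trans (min_le_left _ _) (min_le_left _ _)
  have hεε₁ : ε ≤ ε₁ / (8*L) := le_trans (min_le_left _ _) (min_le_right _ _)
  have hε8L : ε ≤ 1/(8*L) := min_le_right _ _
  have hε18 : ε ≤ 1/8 := by
    refine le_trans hε8L ?_
    rw [div_le_div_iff₀ (by positivity) (by norm_num)]
    linarith
  clear_value ε
  refine ⟨ε, ⟨hε0, by linarith⟩, ?_⟩
  set Mx : ℝ := max (16/c₁) ((1+8*L^2)/c₂) with hMx
  have hMx1 : 16/c₁ ≤ Mx := le_max_left _ _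
  have hMx2 : (1+8*L^2)/c₂ ≤ Mx := le_max_right _ _
  have hMx0 : 0 < Mx := lt_of_lt_of_le (by positivity) hMx1
  set Cup : ℝ := (3:ℝ) * (64*C₁*L^2 + 16*C₁ + C₂) with hCup
  set Klow : ℝ := (γ - 1) * Mx with hKlow
  have hCup0 : 0 < Cup := by positivity
  have hKlow0 : 0 < Klow := by positivity
  clear_value Mx
  refine ⟨max (max Klow Cup) 1, le_max_right _ _, ?_⟩
  intro a b ha hb
  set C : ℝ := max (max Klow Cup) 1 with hC
  have hC0 : 0 < C := lt_of_lt_of_le one_pos (le_max_right _ _)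
  clear_value C
  have ha8 : |a| ≤ 1/8 := le_trans ha hε18
  have hb8 : |b| ≤ 1/8 := le_trans hb hε18
  have ha' := abs_le.1 ha8
  have hb' := abs_le.1 hb8
  set u : ℝ := 1 + a with hudef
  set v : ℝ := 1 + a + b with hvdef
  have hu : 0 < u := by rw [hudef]; linarith [ha'.1]
  have hv : 0 < v := by rw [hvdef]; linarith [ha'.1, hb'.1]
  set w : ℝ := u ^ ((4-2*γ)/γ) with hwdef
  have hw0 : 0 < w := Real.rpow_pos_of_pos hu _
  have hua : u - 1 = a := by rw [hudef]; ring
  have hw1 : |w - 1| ≤ L * |a| := by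
    have := HL u (by rw [hua]; linarith [ha'.1, ha'.2, abs_le.1 ha8])
    rwa [hua] at this
  have hLa : L * |a| ≤ 1/8 := by
    have h1 : L * |a| ≤ L * ε := mul_le_mul_of_nonneg_left ha hL0.le
    have h2 : L * ε ≤ L * (1/(8*L)) := mul_le_mul_of_nonneg_left hε8L hL0.le
    have h3 : L * (1/(8*L)) = 1/8 := by field_simp
    linarith
  have hw1' := abs_le.1 (le_trans hw1 hLa)
  have hwlo : 7/8 ≤ w := by linarith [hw1'.1]
  have hwhi : w ≤ 9/8 := by linarith [hw1'.2]
  set t : ℝ := v / w with htdef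
  have hvw : v - w = b + (a - (w - 1)) := by rw [hvdef]; ring
  have hvwabs : |v - w| ≤ 2 * L * |a| + |b| := by
    rw [hvw]
    have e1 : |b + (a - (w-1))| ≤ |b| + |a - (w-1)| := abs_add_le _ _
    have e2 : |a - (w-1)| ≤ |a| + |w - 1| := abs_sub _ _
    have e3 : |a| ≤ L * |a| := le_mul_of_one_le_left (abs_nonneg a) hL1
    linarith [hw1]
  have ht1 : t - 1 = (v - w) / w := by rw [htdef]; field_simp
  have htε₁ : |t - 1| ≤ ε₁ := by
    rw [ht1, abs_div, abs_of_pos hw0, div_le_iff₀ hw0]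
    have h1 : |v - w| ≤ 2 * L * ε + ε := by
      have e1 := mul_le_mul_of_nonneg_left ha (by linarith : (0:ℝ) ≤ 2*L)
      linarith [hvwabs, hb]
    have h2 : ε ≤ L * ε := le_mul_of_one_le_left hε0.le hL1
    have h3 : 3 * L * ε ≤ 3 * L * (ε₁ / (8*L)) :=
      mul_le_mul_of_nonneg_left hεε₁ (by linarith)
    have h4 : 3 * L * (ε₁ / (8*L)) = 3/8 * ε₁ := by field_simp
    have h5 : (3:ℝ)/8 * ε₁ ≤ ε₁ * (7/8) := by linarith [hε₁.1]
    have h6 : ε₁ * (7/8) ≤ ε₁ * w := mul_le_mul_of_nonneg_left hwlo (le_of_lt hε₁.1)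
    linarith
  have hψ := Hψ t htε₁
  have hm := Hm u (by rw [hua]; exact le_trans ha hεε₂)
  have hid := key_identity (γ := γ) hγ0 hu hv
  have hvu : v - u = b := by rw [hvdef, hudef]; ring
  rw [hvu] at hid
  set ψval : ℝ := t ^ (-(γ-1)) - 1 + (γ-1) * (t - 1) with hψval
  set mval : ℝ := γ * u ^ (-(4*(γ-1)/γ)) - 4*(γ-1) * u ^ (-1:ℝ) + (3*γ-4) with hmval
  set X : ℝ := u ^ (-2:ℝ) with hXdef
  have hXinv : X = (u^2)⁻¹ := by
    rw [hXdef, show ((-2:ℝ)) = -((2:ℕ):ℝ) by norm_num, Real.rpow_neg hu.le, Real.rpow_natCast]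
  have hu78 : 7/8 ≤ u := by rw [hudef]; linarith [ha'.1]
  have hu98 : u ≤ 9/8 := by rw [hudef]; linarith [ha'.2]
  have hXpos : 0 < X := by rw [hXinv]; positivity
  have hXmul : u^2 * X = 1 := by rw [hXinv]; field_simp
  obtain ⟨hXlo, hXhi⟩ := aux_X_bounds hu78 hu98 hXmul hXpos
  clear_value X
  have htsq : (t-1)^2 * w^2 = (v-w)^2 := by
    rw [ht1]; field_simp
  obtain ⟨hwsq_lo, hwsq_hi⟩ := aux_sq_bounds hwlo hwhi
  obtain ⟨htsq_lo, htsq_hi⟩ := aux_tsq htsq hwsq_lo hwsq_hi (sq_nonneg _)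
  obtain ⟨hKlo, hKhi⟩ := aux_K hXlo hXhi hwlo hwhi
  have hKpos : 0 < X * w := by positivity
  have hψ_lo : c₁ * (t-1)^2 ≤ ψval := hψ.1
  have hψ_hi : ψval ≤ C₁ * (t-1)^2 := hψ.2
  have hψval_nonneg : 0 ≤ ψval := le_trans (by positivity) hψ_lo
  have hm_lo : c₂ * a^2 ≤ mval := by have := hm.1; rwa [hua] at this
  have hm_hi : mval ≤ C₂ * a^2 := by have := hm.2; rwa [hua] at this
  rw [← hwdef] at hid
  clear_value t w ψval mval
  have hP_lo : c₁/8 * (v-w)^2 ≤ X * w * ψval := by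
    have h1 : X * w * (c₁ * (t-1)^2) ≤ X * w * ψval :=
      mul_le_mul_of_nonneg_left hψ_lo hKpos.le
    have h2 := (aux_P hKlo hKhi hc₁ htsq_lo htsq_hi (sq_nonneg _)).1
    linarith
  have hP_hi : X * w * ψval ≤ 8 * C₁ * (v-w)^2 := by
    have h1 : X * w * ψval ≤ X * w * (C₁ * (t-1)^2) :=
      mul_le_mul_of_nonneg_left hψ_hi hKpos.le
    have h2 := (aux_P hKlo hKhi hC₁ htsq_lo htsq_hi (sq_nonneg _)).2
    linarith
  have hvw_sq_hi : (v-w)^2 ≤ 2*b^2 + 8*L^2*a^2 := by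
    have h1 : (v-w)^2 ≤ (2*L*|a| + |b|)^2 := aux_sq_abs hvwabs
    have h2 := aux_vw_hi (abs_nonneg a) (abs_nonneg b) hL1 h1
    rwa [sq_abs, sq_abs] at h2
  have hb_sq : b^2 ≤ 2*(v-w)^2 + 8*L^2*a^2 := by
    have h1 : |b| ≤ |v - w| + 2*L*|a| := by
      have := abs_sub_abs_le_abs_sub b (b + (a - (w-1)))
      have e2 : |a - (w-1)| ≤ |a| + |w-1| := abs_sub _ _
      have e3 : |b| - |v - w| ≤ 2*L*|a| := by
        rw [hvw]
        have := abs_sub_abs_le_abs_sub b (-(a - (w-1)))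
        have e4 : |b - -(a - (w-1))| = |b + (a - (w-1))| := by ring_nf
        have e5 : |(-(a - (w-1)))| = |a - (w-1)| := abs_neg _
        have e6 : |a| ≤ L * |a| := le_mul_of_one_le_left (abs_nonneg a) hL1
        calc |b| - |b + (a - (w-1))| ≤ |b - (b + (a - (w-1)))| := abs_sub_abs_le_abs_sub _ _
          _ = |a - (w-1)| := by rw [show b - (b + (a - (w-1))) = -(a - (w-1)) by ring, abs_neg]
          _ ≤ |a| + |w-1| := abs_sub _ _
          _ ≤ 2*L*|a| := by linarith [hw1, e6]
      linarith
    have h2 := aux_b_sq (abs_nonneg a) (abs_nonneg b) (abs_nonneg (v-w)) hL1 h1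
    rwa [sq_abs, sq_abs, sq_abs] at h2
  set F : ℝ := X * w * ψval + mval with hFdef
  clear_value F
  have hF_hi : F ≤ (64*C₁*L^2 + 16*C₁ + C₂) * (a^2 + b^2) := by
    have := aux_F_hi hP_hi hm_hi hvw_sq_hi (sq_nonneg _) hC₁ hC₂ (sq_nonneg a) (sq_nonneg b)
    linarith
  have hF_lo : (a^2 + b^2) ≤ Mx * F := by
    have hFpos : 0 ≤ F := by
      have h1 : 0 ≤ X * w * ψval := by positivity
      have h2 : 0 ≤ c₂ * a^2 := by positivity
      rw [hFdef]; linarith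
    have h1 : a^2 + b^2 ≤ 2*(v-w)^2 + (1+8*L^2)*a^2 := by linarith [hb_sq]
    have h2 : (16/c₁) * (c₁/8 * (v-w)^2) = 2 * (v-w)^2 := by field_simp; ring
    have h3 : ((1+8*L^2)/c₂) * (c₂ * a^2) = (1+8*L^2) * a^2 := by field_simp
    have h4 : (16/c₁) * (c₁/8 * (v-w)^2) ≤ Mx * (X * w * ψval) := by
      have h5 : (16/c₁) * (c₁/8 * (v-w)^2) ≤ (16/c₁) * (X * w * ψval) :=
        mul_le_mul_of_nonneg_left hP_lo (by positivity)
      have h6 : (16/c₁) * (X * w * ψval) ≤ Mx * (X * w * ψval) :=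
        mul_le_mul_of_nonneg_right hMx1 (by positivity)
      linarith
    have h7 : ((1+8*L^2)/c₂) * (c₂*a^2) ≤ Mx * mval := by
      have hmnn : 0 ≤ mval := le_trans (by positivity) hm_lo
      have h8 : ((1+8*L^2)/c₂) * (c₂*a^2) ≤ ((1+8*L^2)/c₂) * mval :=
        mul_le_mul_of_nonneg_left hm_lo (by positivity)
      have h9 : ((1+8*L^2)/c₂) * mval ≤ Mx * mval :=
        mul_le_mul_of_nonneg_right hMx2 hmnn
      linarith
    have h10 : Mx * (X * w * ψval) + Mx * mval = Mx * F := by rw [hFdef]; ring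
    calc a^2 + b^2 ≤ 2*(v-w)^2 + (1+8*L^2)*a^2 := h1
      _ = 16/c₁ * (c₁/8*(v-w)^2) + (1+8*L^2)/c₂ * (c₂*a^2) := by rw [h2, h3]
      _ ≤ Mx*(X*w*ψval) + Mx*mval := add_le_add h4 h7
      _ = Mx * F := h10
  have hFnn : 0 ≤ F := by
    have h1 : 0 ≤ Mx * F := le_trans (by positivity) hF_lo
    exact (mul_nonneg_iff_of_pos_left hMx0).1 h1
  have hE : E₀ a b = (1/(γ-1)) * F := by
    show (1 / (γ - 1)) * ((1 + a) ^ (2 - 2 * γ) * (1 + a + b) ^ (1 - γ)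
        - 3 * (γ - 1) * (1 + a) ^ (-1 : ℝ) + (γ - 1) * (1 + a) ^ (-2 : ℝ) * b + (3 * γ - 4))
      = (1/(γ-1)) * F
    congr 1
    rw [← hid, hXdef, hudef, hvdef]
  constructor
  · rw [hE]
    have hC_ge : Klow ≤ C := by rw [hC]; exact le_trans (le_max_left _ _) (le_max_left _ _)
    have hEnn : 0 ≤ (1/(γ-1)) * F := by positivity
    have h1 : a^2 + b^2 ≤ Klow * ((1/(γ-1)) * F) := by
      rw [hKlow, show (γ-1) * Mx * ((1/(γ-1)) * F) = Mx * F * ((γ-1)/(γ-1)) by ring,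
        div_self (ne_of_gt hγ1), mul_one]
      exact hF_lo
    rw [inv_mul_le_iff₀ hC0]
    calc a^2 + b^2 ≤ Klow * ((1/(γ-1)) * F) := h1
      _ ≤ C * ((1/(γ-1)) * F) := mul_le_mul_of_nonneg_right hC_ge hEnn
  · rw [hE]
    have hC_ge : Cup ≤ C := by rw [hC]; exact le_trans (le_max_right _ _) (le_max_left _ _)
    have hγ13 : 1/(γ-1) ≤ 3 := by rw [div_le_iff₀ hγ1]; linarith
    calc (1/(γ-1)) * F ≤ 3 * F := mul_le_mul_of_nonneg_right hγ13 hFnn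
      _ ≤ 3 * ((64*C₁*L^2 + 16*C₁ + C₂) * (a^2+b^2)) :=
          mul_le_mul_of_nonneg_left hF_hi (by norm_num)
      _ = Cup * (a^2+b^2) := by rw [hCup]; ring
      _ ≤ C * (a^2+b^2) := mul_le_mul_of_nonneg_right hC_ge (by positivity)
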